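/- Let R be a UFD, u, v ∈ R \ {0}, C = R[Y]/(uY − v) an integral domain, and let u_j be a prime factor of u in R. Then C/u_jC is isomorphic as an R-algebra to a polynomial ring in one variable over R/(u_j, v)R. Consequently, u_j is a prime element of C if and only if (u_j, v)R is a prime ideal of R, and u_j is a unit of C if and only if (u_j, v)R = R. -/

import Mathlib

noncomputable section

/-- The simple birational extension `C = R[Y]/(uY - v)` of `R`. -/
def birat (R : Type) [CommRing R] (u v : R) : Type :=
  Polynomial R ⧸ Ideal.span {Polynomial.C u * Polynomial.X - Polynomial.C v}

instance (R : Type) [CommRing R] (u v : R) : CommRing (birat R u v) :=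
  inferInstanceAs (CommRing (_ ⧸ _))

instance (R : Type) [CommRing R] (u v : R) : Algebra R (birat R u v) :=
  inferInstanceAs (Algebra R (_ ⧸ _))

/-- The image of an element of `R[Y]` in `C = R[Y]/(uY - v)`. -/
def biratMk (R : Type) [CommRing R] (u v : R) (a : Polynomial R) : birat R u v :=
  Ideal.Quotient.mk _ a

/-- key isomorphism inside Proposition 3.4.
`C/u_jC ≅ (R/(u_j,v))^[1]`; consequently `u_j` is prime in `C` iff `(u_j,v)R` is prime,
and `u_j` is a unit of `C` iff `(u_j,v)R = R`. -/
theorem stmt2 (R : Type) [CommRing R] [IsDomain R] [UniqueFactorizationMonoid R]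
    (u v : R) (hu : u ≠ 0) (hv : v ≠ 0)
    [IsDomain (birat R u v)]
    (uj : R) (hprime : Prime uj) (hdvd : uj ∣ u) :
    Nonempty ((birat R u v ⧸ Ideal.span {biratMk R u v (Polynomial.C uj)})
        ≃ₐ[R] Polynomial (R ⧸ Ideal.span {uj, v})) ∧
    (Prime (biratMk R u v (Polynomial.C uj)) ↔ (Ideal.span {uj, v}).IsPrime) ∧
    (IsUnit (biratMk R u v (Polynomial.C uj)) ↔ Ideal.span {uj, v} = ⊤) := by
  classical
  obtain ⟨w, hw⟩ := hdvd
  set I : Ideal (Polynomial R) :=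
    Ideal.span {Polynomial.C u * Polynomial.X - Polynomial.C v} with hI
  set J : Ideal (Polynomial R) := Ideal.span {Polynomial.C uj} with hJdef
  set K : Ideal R := Ideal.span {uj, v} with hK
  -- the ideal of birat generated by uj equals the mapped ideal
  have hJ : Ideal.span {biratMk R u v (Polynomial.C uj)}
      = J.map (Ideal.Quotient.mk I) := by
    rw [hJdef, Ideal.map_span, Set.image_singleton]
    rfl
  -- I ⊔ J = map C K
  have hIJ : I ⊔ J = K.map (Polynomial.C : R →+* Polynomial R) := by
    have hmap : K.map (Polynomial.C : R →+* Polynomial R)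
        = Ideal.span {Polynomial.C uj, Polynomial.C v} := by
      rw [hK, Ideal.map_span, Set.image_insert_eq, Set.image_singleton]
    rw [hmap, hI, hJdef, ← Ideal.span_union]
    apply le_antisymm <;> rw [Ideal.span_le] <;> intro x hx
    · rcases hx with hx | hx
      · subst hx
        exact Ideal.mem_span_pair.mpr
          ⟨Polynomial.C w * Polynomial.X, -1, by rw [hw, map_mul]; ring⟩
      · rw [Set.mem_singleton_iff] at hx
        subst hx
        exact Ideal.subset_span (Set.mem_insert _ _)
    · rcases hx with hx | hx
      · subst hx
        exact Ideal.mem_span_pair.mpr ⟨0, 1, by ring⟩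
      · rw [Set.mem_singleton_iff] at hx
        subst hx
        exact Ideal.mem_span_pair.mpr
          ⟨-1, Polynomial.C w * Polynomial.X, by rw [hw, map_mul]; ring⟩
  -- the ring equivalence
  haveI : (Ideal.map (Ideal.Quotient.mk I) J : Ideal (birat R u v)).IsTwoSided := inferInstance
  let e : (birat R u v ⧸ Ideal.span {biratMk R u v (Polynomial.C uj)})
      ≃+* Polynomial (R ⧸ K) :=
    (@Ideal.quotEquivOfEq (birat R u v) _ _ _ inferInstance this hJ).trans
      ((DoubleQuot.quotQuotEquivQuotSup I J).trans
        ((Ideal.quotEquivOfEq hIJ).trans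
          (K.polynomialQuotientEquivQuotientPolynomial).symm))
  have key : ∀ x : Polynomial R,
      e (Ideal.Quotient.mk _ (biratMk R u v x)) = x.map (Ideal.Quotient.mk K) := by
    intro x
    show e (Ideal.Quotient.mk _ (Ideal.Quotient.mk I x)) = _
    simp only [e, RingEquiv.trans_apply]
    exact Ideal.polynomialQuotientEquivQuotientPolynomial_symm_mk K x
  -- nonzero
  have hCuj0 : (Polynomial.C uj : Polynomial R) ≠ 0 := by
    simpa using hprime.ne_zero
  have hlin : (Polynomial.C u * Polynomial.X - Polynomial.C v : Polynomial R).natDegree = 1 := by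
    rw [sub_eq_add_neg, ← map_neg]
    exact Polynomial.natDegree_linear hu
  have hlin0 : (Polynomial.C u * Polynomial.X - Polynomial.C v : Polynomial R) ≠ 0 := by
    intro h
    rw [h] at hlin
    simp at hlin
  have hne : biratMk R u v (Polynomial.C uj) ≠ 0 := by
    intro h
    have hmem : (Polynomial.C uj : Polynomial R) ∈ I :=
      Ideal.Quotient.eq_zero_iff_mem.mp h
    rw [hI, Ideal.mem_span_singleton] at hmem
    obtain ⟨q, hq⟩ := hmem
    rcases eq_or_ne q 0 with rfl | hq0
    · rw [mul_zero] at hq; exact hCuj0 hq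
    · have := congrArg Polynomial.natDegree hq
      rw [Polynomial.natDegree_C, Polynomial.natDegree_mul hlin0 hq0, hlin] at this
      omega
  have halg : (birat R u v ⧸ Ideal.span {biratMk R u v (Polynomial.C uj)})
      ≃ₐ[R] Polynomial (R ⧸ K) := by
    refine AlgEquiv.ofRingEquiv (f := e) ?_
    intro r
    have h1 : algebraMap R (birat R u v ⧸ Ideal.span {biratMk R u v (Polynomial.C uj)}) r
        = Ideal.Quotient.mk _ (biratMk R u v (Polynomial.C r)) := rfl
    rw [h1, key]
    simp [Polynomial.algebraMap_eq]
  refine ⟨⟨halg⟩, ?_, ?_⟩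
  · rw [← Ideal.span_singleton_prime hne, ← Ideal.Quotient.isDomain_iff_prime,
      ← Ideal.Quotient.isDomain_iff_prime]
    constructor
    · intro h
      haveI : IsDomain (Polynomial (R ⧸ K)) :=
        Function.Injective.isDomain e.symm.toRingHom e.symm.injective
      exact Function.Injective.isDomain (Polynomial.C : (R ⧸ K) →+* Polynomial (R ⧸ K))
        Polynomial.C_injective
    · intro h
      exact Function.Injective.isDomain e.toRingHom e.injective
  · rw [← Ideal.span_singleton_eq_top, ← Ideal.Quotient.subsingleton_iff,
      ← Ideal.Quotient.subsingleton_iff]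
    constructor
    · intro h
      haveI : Subsingleton (Polynomial (R ⧸ K)) := e.symm.toEquiv.subsingleton
      exact ⟨fun a b => Polynomial.C_injective (Subsingleton.elim _ _)⟩
    · intro h
      haveI : Subsingleton (Polynomial (R ⧸ K)) := inferInstance
      exact e.toEquiv.subsingleton
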